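/- arXiv:1911.09663 — 3 statements merged into one kernel-verified Lean document; each statement's English description precedes it below -/
import Mathlib

section
/- Let x, y, x', y' be real numbers with (x,y) and (x',y') both in the blunt square S_b = [-1,1]² \ {-1,1}² (i.e., |x|,|y|,|x'|,|y'| ≤ 1 and not both |x|=1 and |y|=1, and not both |x'|=1 and |y'|=1). Then xx' + xy' + yx' - yy' < 2. -/
theorem blunt_square_CHSH (x y x' y' : ℝ)
    (hx : |x| ≤ 1) (hy : |y| ≤ 1) (hx' : |x'| ≤ 1) (hy' : |y'| ≤ 1)
    (h1 : ¬ (|x| = 1 ∧ |y| = 1)) (h2 : ¬ (|x'| = 1 ∧ |y'| = 1)) :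
    x * x' + x * y' + y * x' - y * y' < 2 := by
  have h1' : |x| < 1 ∨ |y| < 1 := by
    by_contra h
    push_neg at h
    exact h1 ⟨le_antisymm hx (h.1), le_antisymm hy (h.2)⟩
  have h2' : |x'| < 1 ∨ |y'| < 1 := by
    by_contra h
    push_neg at h
    exact h2 ⟨le_antisymm hx' (h.1), le_antisymm hy' (h.2)⟩
  have key : |x' + y'| + |x' - y'| ≤ 2 := by
    rw [abs_le] at hx' hy'
    rcases abs_cases (x' + y') with ⟨e1, _⟩ | ⟨e1, _⟩ <;>
      rcases abs_cases (x' - y') with ⟨e2, _⟩ | ⟨e2, _⟩ <;> linarith [hx'.1, hx'.2, hy'.1, hy'.2]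
  have hrw : x * x' + x * y' + y * x' - y * y' = x * (x' + y') + y * (x' - y') := by ring
  rw [hrw]
  rcases h1' with hlt | hlt
  · by_cases hab : x' + y' = 0
    · -- then y' = -x' and both |x'|, |y'| < 1
      have hy'x : y' = -x' := by linarith [hab]
      have hx'lt : |x'| < 1 := by
        rcases h2' with h | h
        · exact h
        · rwa [hy'x, abs_neg] at h
      rw [abs_lt] at hx'lt
      rw [abs_le] at hy
      rw [hab, hy'x]
      nlinarith [sq_nonneg (y - x'), sq_nonneg (y + x'), hy.1, hy.2, hx'lt.1, hx'lt.2]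
    · have habs : (0:ℝ) < |x' + y'| := abs_pos.2 hab
      have hA : x * (x' + y') < |x' + y'| := by
        calc x * (x' + y') ≤ |x * (x' + y')| := le_abs_self _
          _ = |x| * |x' + y'| := abs_mul _ _
          _ < 1 * |x' + y'| := by exact mul_lt_mul_of_pos_right hlt habs
          _ = |x' + y'| := one_mul _
      have hB : y * (x' - y') ≤ |x' - y'| := by
        calc y * (x' - y') ≤ |y * (x' - y')| := le_abs_self _
          _ = |y| * |x' - y'| := abs_mul _ _
          _ ≤ 1 * |x' - y'| := mul_le_mul_of_nonneg_right hy (abs_nonneg _)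
          _ = |x' - y'| := one_mul _
      linarith
  · by_cases hab : x' - y' = 0
    · have hy'x : y' = x' := by linarith [hab]
      have hx'lt : |x'| < 1 := by
        rcases h2' with h | h
        · exact h
        · rwa [hy'x] at h
      rw [abs_lt] at hx'lt
      rw [abs_le] at hx
      rw [hab, hy'x]
      nlinarith [sq_nonneg (x - x'), sq_nonneg (x + x'), hx.1, hx.2, hx'lt.1, hx'lt.2]
    · have habs : (0:ℝ) < |x' - y'| := abs_pos.2 hab
      have hA : x * (x' + y') ≤ |x' + y'| := by
        calc x * (x' + y') ≤ |x * (x' + y')| := le_abs_self _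
          _ = |x| * |x' + y'| := abs_mul _ _
          _ ≤ 1 * |x' + y'| := mul_le_mul_of_nonneg_right hx (abs_nonneg _)
          _ = |x' + y'| := one_mul _
      have hB : y * (x' - y') < |x' - y'| := by
        calc y * (x' - y') ≤ |y * (x' - y')| := le_abs_self _
          _ = |y| * |x' - y'| := abs_mul _ _
          _ < 1 * |x' - y'| := by exact mul_lt_mul_of_pos_right hlt habs
          _ = |x' - y'| := one_mul _
      linarith
end

section
/- For α, β ∈ ℝ⁴, let Tᵢ ∈ ℝ³ and Uᵢ ∈ ℝ³ be the rescaled kite generators (Tᵢ = cᵢ(α)tᵢ(α), Uᵢ = cᵢ(β)tᵢ(β) as in the kite construction), and let ω = T₁⊗U₂ - T₂⊗U₂ + T₂⊗U₁ + T₃⊗U₃ ∈ ℝ³⊗ℝ³ viewed as a 3×3 matrix. With f(m) = m₁₁+m₁₂+m₂₁-m₂₂-2m₃₃ and R(γ) = (γ₁γ₂-1)(γ₃-γ₄) - (γ₃γ₄-1)(γ₁-γ₂), one has f(ω) = -R(α)·R(β). -/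
noncomputable section

/-- The rescaled generators of the cone over the kite `Q_γ`. -/
def kiteT (γ : Fin 4 → ℝ) : Fin 4 → Fin 3 → ℝ :=
  ![(2 + γ 1 + γ 3 + γ 2 * (γ 1 - γ 3)) • ![1, γ 0, 1],
    (2 + γ 0 + γ 2 + γ 3 * (γ 0 - γ 2)) • ![γ 1, 1, 1],
    (2 - γ 3 - γ 1 + γ 0 * (γ 3 - γ 1)) • ![-1, γ 2, 1],
    (2 - γ 2 - γ 0 + γ 1 * (γ 2 - γ 0)) • ![γ 3, -1, 1]]

/-- The functional `f` on 3×3 matrices. -/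
def fCHSH (m : Matrix (Fin 3) (Fin 3) ℝ) : ℝ :=
  m 0 0 + m 0 1 + m 1 0 - m 1 1 - 2 * m 2 2

/-- The quantity `R(γ)`. -/
def Rkite (γ : Fin 4 → ℝ) : ℝ :=
  (γ 0 * γ 1 - 1) * (γ 2 - γ 3) - (γ 2 * γ 3 - 1) * (γ 0 - γ 1)

theorem f_omega_eq_neg_R_mul_R (α β : Fin 4 → ℝ)
    (ω : Matrix (Fin 3) (Fin 3) ℝ)
    (hω : ∀ i j, ω i j =
      kiteT α 0 i * kiteT β 1 j - kiteT α 1 i * kiteT β 1 j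
        + kiteT α 1 i * kiteT β 0 j + kiteT α 2 i * kiteT β 2 j) :
    fCHSH ω = -(Rkite α * Rkite β) := by
  simp only [fCHSH, hω, kiteT, Rkite, Matrix.cons_val_zero, Matrix.cons_val_one,
    Matrix.head_cons, Matrix.cons_val_two, Matrix.tail_cons, Pi.smul_apply, smul_eq_mul]
  ring

end
end

section
/- Let F ⊂ ℝⁿ be a convex set and x ∈ ℝⁿ a point not in the affine hull of F. Then the relative interior of conv(F ∪ {x}) equals { λx + (1-λ)y : y ∈ relint(F), λ ∈ (0,1) }. -/
open Set Metric

lemma mem_intrinsicInterior_iff_ball {E : Type*} [NormedAddCommGroup E] [NormedSpace ℝ E]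
    {s : Set E} {z : E} :
    z ∈ intrinsicInterior ℝ s ↔
      z ∈ affineSpan ℝ s ∧ ∃ ε > 0, Metric.ball z ε ∩ (affineSpan ℝ s : Set E) ⊆ s := by
  rw [mem_intrinsicInterior]
  constructor
  · rintro ⟨y, hy, rfl⟩
    refine ⟨y.2, ?_⟩
    rw [mem_interior_iff_mem_nhds, Metric.mem_nhds_iff] at hy
    obtain ⟨ε, hε, hb⟩ := hy
    refine ⟨ε, hε, ?_⟩
    rintro w ⟨hw1, hw2⟩
    exact hb (show (⟨w, hw2⟩ : affineSpan ℝ s) ∈ Metric.ball y ε by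
      simpa [Metric.mem_ball, Subtype.dist_eq] using hw1)
  · rintro ⟨hz, ε, hε, hb⟩
    refine ⟨⟨z, hz⟩, ?_, rfl⟩
    rw [mem_interior_iff_mem_nhds, Metric.mem_nhds_iff]
    exact ⟨ε, hε, fun w hw => hb ⟨by simpa [Metric.mem_ball, Subtype.dist_eq] using hw, w.2⟩⟩

set_option maxHeartbeats 1000000 in
theorem intrinsicInterior_pyramid {n : ℕ}
    (F : Set (EuclideanSpace ℝ (Fin n))) (hF : Convex ℝ F) (hFne : F.Nonempty)
    (x : EuclideanSpace ℝ (Fin n)) (hx : x ∉ affineSpan ℝ F) :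
    intrinsicInterior ℝ (convexHull ℝ (F ∪ {x}))
      = {z | ∃ y ∈ intrinsicInterior ℝ F, ∃ l : ℝ, l ∈ Set.Ioo (0:ℝ) 1 ∧
          z = l • x + (1 - l) • y} := by
  classical
  obtain ⟨a, ha⟩ := hFne
  have haA : a ∈ affineSpan ℝ F := subset_affineSpan ℝ F ha
  set A : AffineSubspace ℝ (EuclideanSpace ℝ (Fin n)) := affineSpan ℝ F with hA
  set V : Submodule ℝ (EuclideanSpace ℝ (Fin n)) := A.direction with hV
  set u : EuclideanSpace ℝ (Fin n) :=
    (x - a) - (V.orthogonalProjection (x - a) : EuclideanSpace ℝ (Fin n)) with hu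
  have hu_orth : ∀ v ∈ V, inner ℝ u v = (0:ℝ) := by
    intro v hv
    exact (Submodule.mem_orthogonal' V u).mp
      (Submodule.sub_starProjection_mem_orthogonal (K := V) (x - a)) v hv
  have hxa_notmem : (x - a) ∉ V := by
    intro h
    have h2 : (x - a) +ᵥ a ∈ A := AffineSubspace.vadd_mem_of_mem_direction h haA
    apply hx
    simpa [vadd_eq_add, sub_add_cancel] using h2
  have hu_ne : u ≠ 0 := by
    intro h
    exact hxa_notmem (by rw [sub_eq_zero] at h; rw [h]; exact Submodule.coe_mem _)
  have hK : (0:ℝ) < ‖u‖ := norm_pos_iff.mpr hu_ne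
  have hu_inner_xa : inner ℝ u (x - a) = (‖u‖^2 : ℝ) := by
    have hdecu : (x - a) = u + (V.orthogonalProjection (x - a) : EuclideanSpace ℝ (Fin n)) := by
      rw [hu]; abel
    rw [hdecu, inner_add_right, hu_orth _ (Submodule.coe_mem _), add_zero,
      real_inner_self_eq_norm_sq]
  set f : EuclideanSpace ℝ (Fin n) → ℝ := fun z => inner ℝ u (z - a) / ‖u‖^2 with hf
  have hfA : ∀ y ∈ A, ∀ l : ℝ, f (l • x + (1 - l) • y) = l := by
    intro y hy l
    have hyV : y - a ∈ V := (AffineSubspace.vsub_right_mem_direction_iff_mem haA y).mpr hy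
    have hsplit : l • x + (1 - l) • y - a = l • (x - a) + (1 - l) • (y - a) := by module
    rw [hf]
    simp only [hsplit, inner_add_right, inner_smul_right, hu_inner_xa, hu_orth _ hyV]
    field_simp
    ring
  have hf_lip : ∀ z w, |f z - f w| ≤ ‖z - w‖ / ‖u‖ := by
    intro z w
    have hfsub : f z - f w = inner ℝ u (z - w) / ‖u‖^2 := by
      rw [hf]
      have hzw : z - a - (w - a) = z - w := by abel
      rw [div_sub_div_same, ← inner_sub_right, hzw]
    rw [hfsub, abs_div, abs_of_nonneg (by positivity : (0:ℝ) ≤ ‖u‖^2)]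
    have hcs := abs_real_inner_le_norm u (z - w)
    rw [pow_two, div_le_div_iff₀ (by positivity) hK]
    calc |inner ℝ u (z - w)| * ‖u‖ ≤ (‖u‖ * ‖z - w‖) * ‖u‖ := by
          nlinarith [abs_nonneg (inner ℝ u (z-w) : ℝ)]
      _ = ‖z - w‖ * (‖u‖ * ‖u‖) := by ring
  set S : AffineSubspace ℝ (EuclideanSpace ℝ (Fin n)) := affineSpan ℝ (insert x F) with hS
  set C : Set (EuclideanSpace ℝ (Fin n)) := convexHull ℝ (F ∪ {x}) with hC
  have hUnion : F ∪ {x} = insert x F := Set.union_singleton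
  have hspanC : affineSpan ℝ C = S := by rw [hC, affineSpan_convexHull, hUnion]
  have hAS : A ≤ S := affineSpan_mono ℝ (Set.subset_insert x F)
  have hxS : x ∈ S := subset_affineSpan ℝ _ (Set.mem_insert x F)
  have hCmem : ∀ z, z ∈ C ↔ ∃ l ∈ Set.Icc (0:ℝ) 1, ∃ y ∈ F, z = l • x + (1 - l) • y := by
    intro z
    rw [hC, hUnion, convexHull_insert ⟨a, ha⟩, hF.convexHull_eq, mem_convexJoin]
    constructor
    · rintro ⟨x', hx', y, hy, hseg⟩
      rw [Set.mem_singleton_iff] at hx'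
      subst hx'
      rw [segment_eq_image] at hseg
      obtain ⟨θ, hθ, rfl⟩ := hseg
      exact ⟨1 - θ, ⟨by linarith [hθ.1, hθ.2], by linarith [hθ.1]⟩, y, hy, by ring_nf⟩
    · rintro ⟨l, hl, y, hy, rfl⟩
      refine ⟨x, rfl, y, hy, ?_⟩
      rw [segment_eq_image]
      exact ⟨1 - l, ⟨by linarith [hl.2], by linarith [hl.1]⟩, by ring_nf⟩
  have hSdecomp : ∀ z ∈ S, ∃ r : ℝ, ∃ p ∈ A, z = r • (x - a) + p := by
    intro z hz
    rw [hS, ← affineSpan_insert_affineSpan,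
      AffineSubspace.mem_affineSpan_insert_iff haA x z] at hz
    obtain ⟨r, p, hp, hzeq⟩ := hz
    exact ⟨r, p, hp, by simpa [vsub_eq_sub, vadd_eq_add] using hzeq⟩
  have hfdec : ∀ (r : ℝ), ∀ p ∈ A, f (r • (x - a) + p) = r := by
    intro r p hp
    have hpV : p - a ∈ V := (AffineSubspace.vsub_right_mem_direction_iff_mem haA p).mpr hp
    have hsplit : r • (x - a) + p - a = r • (x - a) + (p - a) := by abel
    rw [hf]
    simp only [hsplit, inner_add_right, inner_smul_right, hu_inner_xa, hu_orth _ hpV]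
    field_simp
    ring
  have hfC : ∀ z ∈ C, f z ∈ Set.Icc (0:ℝ) 1 := by
    intro z hz
    obtain ⟨l, hl, y, hy, rfl⟩ := (hCmem z).mp hz
    rwa [hfA y (subset_affineSpan ℝ F hy) l]
  have hScombo : ∀ z ∈ S, f z ≠ 1 → ∃ y ∈ A, z = (f z) • x + (1 - f z) • y := by
    intro z hz hne
    obtain ⟨r, p, hp, rfl⟩ := hSdecomp z hz
    rw [hfdec r p hp] at hne ⊢
    have h1 : (1:ℝ) - r ≠ 0 := sub_ne_zero.mpr (Ne.symm hne)
    refine ⟨(1 - r)⁻¹ • (p - r • a), ?_, ?_⟩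
    · have heq : (1 - r)⁻¹ • (p - r • a) = (1-r)⁻¹ • (p -ᵥ a) +ᵥ a := by
        rw [vsub_eq_sub, vadd_eq_add]
        have hexp : p - r • a = (1 - r) • ((1-r)⁻¹ • (p - a) + a) := by
          rw [smul_add, smul_inv_smul₀ h1]; module
        calc (1-r)⁻¹ • (p - r • a) = (1-r)⁻¹ • ((1-r) • ((1-r)⁻¹ • (p-a) + a)) := by
              rw [← hexp]
          _ = (1-r)⁻¹ • (p - a) + a := inv_smul_smul₀ h1 _
      rw [heq]
      exact AffineSubspace.smul_vsub_vadd_mem A _ hp haA haA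
    · rw [smul_smul, mul_inv_cancel₀ h1, one_smul]
      module
  ext z
  simp only [Set.mem_setOf_eq]
  constructor
  · intro hz
    rw [mem_intrinsicInterior_iff_ball] at hz
    obtain ⟨hzS, ε, hε, hball⟩ := hz
    rw [hspanC] at hzS hball
    have hzC : z ∈ C := hball ⟨mem_ball_self hε, hzS⟩
    obtain ⟨l, hl, y, hy, hzeq⟩ := (hCmem z).mp hzC
    have hyA : y ∈ A := subset_affineSpan ℝ F hy
    set t : ℝ := ε / (2 * (‖z - x‖ + ‖z - y‖ + 1)) with ht
    have htpos : 0 < t := by positivity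
    -- the point z + t (z - x)
    have hw1S : z + t • (z - x) ∈ S := by
      have hrw : z + t • (z - x) = (1+t) • (z -ᵥ x) +ᵥ x := by
        rw [vsub_eq_sub, vadd_eq_add]; module
      rw [hrw]
      exact AffineSubspace.smul_vsub_vadd_mem S _ hzS hxS hxS
    have hw1ball : z + t • (z - x) ∈ ball z ε := by
      rw [mem_ball, dist_eq_norm]
      have hrw : z + t • (z - x) - z = t • (z - x) := by module
      rw [hrw, norm_smul, Real.norm_eq_abs, abs_of_pos htpos, ht,
        div_mul_eq_mul_div, div_lt_iff₀ (by positivity)]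
      nlinarith [norm_nonneg (z - x), norm_nonneg (z - y)]
    have hw1C := hball ⟨hw1ball, hw1S⟩
    have hfw1 : f (z + t • (z - x)) = (1+t)*l - t := by
      have hrw : z + t • (z - x) = ((1+t)*l - t) • x + (1 - ((1+t)*l - t)) • y := by
        rw [hzeq]; module
      rw [hrw, hfA y hyA]
    have hl0 : 0 < l := by
      have h0 := (hfC _ hw1C).1
      rw [hfw1] at h0
      nlinarith [hl.1, hl.2]
    -- the point z + t (z - y)
    have hw2S : z + t • (z - y) ∈ S := by
      have hrw : z + t • (z - y) = (1+t) • (z -ᵥ y) +ᵥ y := by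
        rw [vsub_eq_sub, vadd_eq_add]; module
      rw [hrw]
      exact AffineSubspace.smul_vsub_vadd_mem S _ hzS (hAS hyA) (hAS hyA)
    have hw2ball : z + t • (z - y) ∈ ball z ε := by
      rw [mem_ball, dist_eq_norm]
      have hrw : z + t • (z - y) - z = t • (z - y) := by module
      rw [hrw, norm_smul, Real.norm_eq_abs, abs_of_pos htpos, ht,
        div_mul_eq_mul_div, div_lt_iff₀ (by positivity)]
      nlinarith [norm_nonneg (z - x), norm_nonneg (z - y)]
    have hw2C := hball ⟨hw2ball, hw2S⟩
    have hfw2 : f (z + t • (z - y)) = (1+t)*l := by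
      have hrw : z + t • (z - y) = ((1+t)*l) • x + (1 - (1+t)*l) • y := by
        rw [hzeq]; module
      rw [hrw, hfA y hyA]
    have hl1 : l < 1 := by
      have h1 := (hfC _ hw2C).2
      rw [hfw2] at h1
      nlinarith [hl.1, hl.2]
    refine ⟨y, ?_, l, ⟨hl0, hl1⟩, hzeq⟩
    rw [mem_intrinsicInterior_iff_ball]
    have h1l : (0:ℝ) < 1 - l := by linarith
    refine ⟨hyA, ε/(1-l), by positivity, ?_⟩
    rintro y' ⟨hy'ball, hy'A⟩
    have hy'A' : y' ∈ A := hy'A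
    have hz'S : l • x + (1-l) • y' ∈ S := by
      have hrw : l • x + (1-l) • y' = l • (x -ᵥ y') +ᵥ y' := by
        rw [vsub_eq_sub, vadd_eq_add]; module
      rw [hrw]
      exact AffineSubspace.smul_vsub_vadd_mem S _ hxS (hAS hy'A') (hAS hy'A')
    have hz'ball : l • x + (1-l) • y' ∈ ball z ε := by
      rw [mem_ball, dist_eq_norm, hzeq]
      have hrw : l • x + (1-l) • y' - (l • x + (1 - l) • y) = (1-l) • (y' - y) := by module
      rw [hrw, norm_smul, Real.norm_eq_abs, abs_of_pos h1l]
      have hd : ‖y' - y‖ < ε/(1-l) := by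
        rw [← dist_eq_norm]; exact hy'ball
      calc (1-l) * ‖y' - y‖ < (1-l) * (ε/(1-l)) := by
            exact mul_lt_mul_of_pos_left hd h1l
        _ = ε := by field_simp
    have hz'C := hball ⟨hz'ball, hz'S⟩
    obtain ⟨l₁, hl₁, y₁, hy₁, heq⟩ := (hCmem _).mp hz'C
    have hll : l₁ = l := by
      have h1 : f (l • x + (1-l) • y') = l := hfA y' hy'A' l
      have h2 : f (l • x + (1-l) • y') = l₁ := by
        rw [heq, hfA y₁ (subset_affineSpan ℝ F hy₁)]
      rw [h1] at h2; exact h2.symm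
    subst hll
    have hyy : (1-l₁) • y' = (1-l₁) • y₁ := by
      have h2 := congrArg (fun w => w - l₁ • x) heq
      simp only [add_sub_cancel_left] at h2
      exact h2
    have hy'eq : y' = y₁ :=
      smul_right_injective (EuclideanSpace ℝ (Fin n)) (by linarith : (1:ℝ)-l₁ ≠ 0) hyy
    rw [hy'eq]; exact hy₁
  · rintro ⟨y, hyI, l, ⟨hl0, hl1⟩, hzeq⟩
    rw [mem_intrinsicInterior_iff_ball] at hyI ⊢
    obtain ⟨hyA, δ, hδ, hballF⟩ := hyI
    rw [hspanC]
    have h1l : (0:ℝ) < 1 - l := by linarith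
    have hzS : z ∈ S := by
      rw [hzeq]
      have hrw : l • x + (1-l) • y = l • (x -ᵥ y) +ᵥ y := by
        rw [vsub_eq_sub, vadd_eq_add]; module
      rw [hrw]
      exact AffineSubspace.smul_vsub_vadd_mem S _ hxS (hAS hyA) (hAS hyA)
    refine ⟨hzS, ?_⟩
    set B : ℝ := (1-l) * ‖u‖ + ‖z - x‖ + 1 with hB
    have hBpos : 0 < B := by positivity
    have hminpos : 0 < min l (1-l) := lt_min hl0 h1l
    have hsqpos : (0:ℝ) < (1-l)^2 := pow_pos h1l 2
    refine ⟨min (‖u‖ * (min l (1-l)) / 2) (δ * ‖u‖ * (1-l)^2 / (2*B)), ?_, ?_⟩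
    · exact lt_min (by positivity) (div_pos (mul_pos (mul_pos hδ hK) hsqpos) (by linarith))
    rintro z' ⟨hz'ball, hz'S⟩
    rw [mem_ball, dist_eq_norm] at hz'ball
    set d : ℝ := ‖z' - z‖ with hd
    have hdnn : 0 ≤ d := norm_nonneg _
    have hd1 : d < ‖u‖ * min l (1-l) / 2 := lt_of_lt_of_le hz'ball (min_le_left _ _)
    have hd2 : d < δ * ‖u‖ * (1-l)^2 / (2*B) := lt_of_lt_of_le hz'ball (min_le_right _ _)
    set r : ℝ := f z' with hr
    have hfz : f z = l := by rw [hzeq]; exact hfA y hyA l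
    have hrl : |r - l| ≤ d / ‖u‖ := by
      rw [hr, ← hfz]; exact hf_lip z' z
    have hrl' : |r - l| < min l (1-l) / 2 := by
      calc |r - l| ≤ d / ‖u‖ := hrl
        _ < (‖u‖ * min l (1-l) / 2) / ‖u‖ := by gcongr
        _ = min l (1-l) / 2 := by field_simp
    have habs := abs_lt.mp hrl'
    have hminl : min l (1-l) ≤ l := min_le_left _ _
    have hminr : min l (1-l) ≤ 1-l := min_le_right _ _
    have hr0 : 0 < r := by linarith [habs.1, habs.2]
    have hr1 : (1-l)/2 < 1 - r := by linarith [habs.1, habs.2]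
    have hrne : r ≠ 1 := by intro h; rw [h] at hr1; linarith
    obtain ⟨y', hy'A, hz'eq⟩ := hScombo z' hz'S hrne
    rw [← hr] at hz'eq
    have h1r : (0:ℝ) < 1 - r := by linarith
    have key : y' - y = ((1-r)*(1-l))⁻¹ • ((1-l) • (z' - z) + (r - l) • (z - x)) := by
      rw [eq_comm, inv_smul_eq_iff₀ (by positivity : ((1:ℝ)-r)*(1-l) ≠ 0)]
      rw [hz'eq, hzeq]
      module
    have hbound : ‖y' - y‖ * ((1-r)*(1-l)) ≤ (1-l) * d + |r - l| * ‖z - x‖ := by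
      have hn := norm_add_le ((1-l) • (z' - z)) ((r - l) • (z - x))
      rw [norm_smul, norm_smul, Real.norm_eq_abs, Real.norm_eq_abs, abs_of_pos h1l] at hn
      calc ‖y' - y‖ * ((1-r)*(1-l))
          = ((1-r)*(1-l)) * ‖y' - y‖ := by ring
        _ = ((1-r)*(1-l)) * (((1-r)*(1-l))⁻¹ * ‖(1-l) • (z' - z) + (r - l) • (z - x)‖) := by
            rw [key, norm_smul, Real.norm_eq_abs,
              abs_of_pos (by positivity : (0:ℝ) < ((1-r)*(1-l))⁻¹)]
        _ = ‖(1-l) • (z' - z) + (r - l) • (z - x)‖ := by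
            rw [← mul_assoc, mul_inv_cancel₀ (by positivity : ((1:ℝ)-r)*(1-l) ≠ 0), one_mul]
        _ ≤ (1-l) * d + |r - l| * ‖z - x‖ := hn
    have hfinal : ‖y' - y‖ < δ := by
      have hrlK : |r - l| * ‖u‖ ≤ d := by
        rw [div_eq_mul_inv] at hrl
        calc |r - l| * ‖u‖ ≤ (d * ‖u‖⁻¹) * ‖u‖ := by
              exact mul_le_mul_of_nonneg_right hrl (norm_nonneg u)
          _ = d := by field_simp
      have hd2' : d * (2*B) < δ * ‖u‖ * (1-l)^2 := by
        rw [div_eq_mul_inv] at hd2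
        calc d * (2*B) < (δ * ‖u‖ * (1-l)^2 * (2*B)⁻¹) * (2*B) := by
              exact mul_lt_mul_of_pos_right hd2 (by positivity)
          _ = δ * ‖u‖ * (1-l)^2 := by field_simp
      rw [hB] at hd2'
      nlinarith [norm_nonneg (y' - y), norm_nonneg (z - x), abs_nonneg (r - l), hdnn,
        mul_le_mul_of_nonneg_right hbound (norm_nonneg u),
        mul_le_mul_of_nonneg_right hrlK (norm_nonneg (z - x)),
        mul_le_mul_of_nonneg_right hr1.le
          (by positivity : (0:ℝ) ≤ ‖y' - y‖ * (1-l) * ‖u‖),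
        mul_pos hK hsqpos]
    have hy'F : y' ∈ F := hballF ⟨by rw [mem_ball, dist_eq_norm]; exact hfinal, hy'A⟩
    rw [hCmem]
    exact ⟨r, ⟨le_of_lt hr0, by linarith⟩, y', hy'F, hz'eq⟩
end
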